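/- arXiv:0810.5717 — 2 statements merged into one kernel-verified Lean document; each statement's English description precedes it below -/
import Mathlib

section
/- A real-valued function F on subsets of a finite set S a-satisfies a CI statement (A ⊥ B | C), i.e., F(C) + F(A∪B∪C) = F(A∪C) + F(B∪C), if and only if Σ_{U ∈ L(A,B|C)} ΔF(U) = 0. -/
open Finset

private lemma neg_one_pow_sub_real (n k : ℕ) (h : k ≤ n) :
    (-1 : ℝ) ^ (n - k) = (-1) ^ n * (-1) ^ k := by
  rw [pow_sub₀ (-1 : ℝ) (by norm_num) h]
  congr 1
  rw [inv_eq_one_div]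
  rcases Nat.even_or_odd k with hk | hk
  · rw [hk.neg_one_pow]; norm_num
  · rw [hk.neg_one_pow]; norm_num

private lemma interval_sum_key {α : Type*} [Fintype α] [DecidableEq α] (X V : Finset α)
    :
    ∑ U ∈ Finset.univ.powerset.filter (fun U => X ⊆ U ∧ U ⊆ V),
      (-1 : ℝ) ^ (V.card - U.card) = if V = X then 1 else 0 := by
  by_cases hXV : X ⊆ V
  case neg =>
    have h1 : Finset.univ.powerset.filter (fun U => X ⊆ U ∧ U ⊆ V) = ∅ := by
      apply Finset.filter_false_of_mem
      intro U _ ⟨h1, h2⟩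
      exact hXV (h1.trans h2)
    have h2 : V ≠ X := fun h => hXV (h ▸ le_rfl)
    rw [h1, Finset.sum_empty, if_neg h2]
  have hbij : ∑ U ∈ Finset.univ.powerset.filter (fun U => X ⊆ U ∧ U ⊆ V),
      (-1 : ℝ) ^ (V.card - U.card)
      = ∑ W ∈ (V \ X).powerset, (-1 : ℝ) ^ (V.card - (X.card + W.card)) := by
    apply Finset.sum_nbij' (fun U => U \ X) (fun W => X ∪ W)
    · intro U hU
      simp only [mem_filter, mem_powerset] at hU
      simp only [mem_powerset]
      exact sdiff_subset_sdiff hU.2.2 le_rfl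
    · intro W hW
      simp only [mem_powerset] at hW
      simp only [mem_filter, mem_powerset]
      refine ⟨subset_univ _, subset_union_left, ?_⟩
      exact union_subset hXV (hW.trans (sdiff_subset))
    · intro U hU
      simp only [mem_filter, mem_powerset] at hU
      exact (union_sdiff_of_subset hU.2.1)
    · intro W hW
      simp only [mem_powerset] at hW
      rw [union_sdiff_left]
      exact sdiff_eq_self_of_disjoint (disjoint_left.mpr fun a ha =>
        (mem_sdiff.mp (hW ha)).2) |>.symm ▸ rfl
    · intro U hU
      simp only [mem_filter, mem_powerset] at hU
      congr 2
      rw [card_sdiff_of_subset hU.2.1, Nat.add_sub_cancel' (card_le_card hU.2.1)]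
  rw [hbij]
  have hXVcard : V.card = X.card + (V \ X).card := by
    rw [card_sdiff_of_subset hXV, Nat.add_sub_cancel' (card_le_card hXV)]
  have : ∀ W ∈ (V \ X).powerset,
      (-1 : ℝ) ^ (V.card - (X.card + W.card)) = (-1) ^ W.card * (-1) ^ (V \ X).card := by
    intro W hW
    simp only [mem_powerset] at hW
    have hle : W.card ≤ (V \ X).card := card_le_card hW
    rw [hXVcard, Nat.add_sub_add_left, neg_one_pow_sub_real _ _ hle, mul_comm]
  rw [Finset.sum_congr rfl this, ← Finset.sum_mul]
  have hz : (∑ W ∈ (V \ X).powerset, (-1 : ℝ) ^ W.card)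
      = if (V \ X) = ∅ then 1 else 0 := by
    have := @Finset.sum_powerset_neg_one_pow_card α _ (V \ X)
    exact_mod_cast congrArg (fun z : ℤ => (z : ℝ)) this
  rw [hz]
  by_cases h : V = X
  · subst h; simp
  · have : V \ X ≠ ∅ := fun h' =>
      h (le_antisymm (sdiff_eq_empty_iff_subset.mp h') hXV)
    simp [this, h]

private lemma mobius_inv {α : Type*} [Fintype α] [DecidableEq α]
    (F ΔF : Finset α → ℝ)
    (hΔ : ∀ X : Finset α,
      ΔF X = ∑ U ∈ Finset.univ.powerset.filter (fun U => X ⊆ U),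
        (-1 : ℝ) ^ (U.card - X.card) * F U)
    (X : Finset α) :
    F X = ∑ U ∈ Finset.univ.powerset.filter (fun U => X ⊆ U), ΔF U := by
  symm
  calc ∑ U ∈ Finset.univ.powerset.filter (fun U => X ⊆ U), ΔF U
      = ∑ U ∈ Finset.univ.powerset, if X ⊆ U then ΔF U else 0 := Finset.sum_filter _ _
    _ = ∑ U ∈ Finset.univ.powerset, ∑ V ∈ Finset.univ.powerset,
          if X ⊆ U ∧ U ⊆ V then (-1 : ℝ) ^ (V.card - U.card) * F V else 0 := by
        apply Finset.sum_congr rfl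
        intro U _
        by_cases hXU : X ⊆ U
        · simp only [hXU, if_true, true_and, hΔ U, Finset.sum_filter]
        · simp [hXU]
    _ = ∑ V ∈ Finset.univ.powerset, ∑ U ∈ Finset.univ.powerset,
          if X ⊆ U ∧ U ⊆ V then (-1 : ℝ) ^ (V.card - U.card) * F V else 0 :=
        Finset.sum_comm
    _ = ∑ V ∈ Finset.univ.powerset, (if V = X then 1 else 0) * F V := by
        apply Finset.sum_congr rfl
        intro V _
        rw [← Finset.sum_filter, ← Finset.sum_mul, interval_sum_key X V]
    _ = F X := by
        simp only [ite_mul, one_mul, zero_mul]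
        rw [Finset.sum_ite_eq' Finset.univ.powerset X F]
        simp

/-- F a-satisfies (A ⊥ B | C) iff the densities sum to zero over the semi-lattice
L(A,B|C) = {U : C ⊆ U, ¬(A ⊆ U), ¬(B ⊆ U)}. -/
theorem asat_iff_density_sum_zero {α : Type*} [Fintype α] [DecidableEq α]
    (A B C : Finset α) (hAB : Disjoint A B) (hAC : Disjoint A C) (hBC : Disjoint B C)
    (F ΔF : Finset α → ℝ)
    (hΔ : ∀ X : Finset α,
      ΔF X = ∑ U ∈ Finset.univ.powerset.filter (fun U => X ⊆ U),
        (-1 : ℝ) ^ (U.card - X.card) * F U) :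
    (F C + F (A ∪ B ∪ C) = F (A ∪ C) + F (B ∪ C)) ↔
      ∑ U ∈ Finset.univ.powerset.filter
        (fun U => C ⊆ U ∧ ¬ A ⊆ U ∧ ¬ B ⊆ U), ΔF U = 0 := by
  have inv := mobius_inv F ΔF hΔ
  have key : F C + F (A ∪ B ∪ C) - (F (A ∪ C) + F (B ∪ C))
      = ∑ U ∈ Finset.univ.powerset.filter
        (fun U => C ⊆ U ∧ ¬ A ⊆ U ∧ ¬ B ⊆ U), ΔF U := by
    rw [inv C, inv (A ∪ B ∪ C), inv (A ∪ C), inv (B ∪ C)]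
    simp_rw [Finset.sum_filter]
    rw [← Finset.sum_add_distrib, ← Finset.sum_add_distrib, ← Finset.sum_sub_distrib]
    apply Finset.sum_congr rfl
    intro U _
    by_cases hC : C ⊆ U <;> by_cases hA : A ⊆ U <;> by_cases hB : B ⊆ U <;>
      simp [hC, hA, hB, union_subset_iff]
  constructor
  · intro h; rw [← key]; linarith
  · intro h; rw [h] at key; linarith
end

section
/- Soundness of strong contraction for semi-lattice inclusion: for pairwise disjoint subsets and well-formed CI statements, L(D,E|C) ⊆ L(A,B|C) ∪ L(D,E|A∪C) ∪ L(D,E|B∪C). -/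
open Finset

def ciLattice {α : Type*} [Fintype α] [DecidableEq α] (A B C : Finset α) :
    Set (Finset α) :=
  {U | C ⊆ U ∧ ¬ A ⊆ U ∧ ¬ B ⊆ U}

/-- Soundness of strong contraction for semi-lattice inclusion. -/
theorem strongContraction_lattice_sound {α : Type*} [Fintype α] [DecidableEq α]
    (A B C D E : Finset α)
    (hAB : Disjoint A B) (hAC : Disjoint A C) (hBC : Disjoint B C)
    (hDE : Disjoint D E) (hDAC : Disjoint D (A ∪ C)) (hEAC : Disjoint E (A ∪ C))
    (hDBC : Disjoint D (B ∪ C)) (hEBC : Disjoint E (B ∪ C)) :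
    ciLattice D E C ⊆
      ciLattice A B C ∪ ciLattice D E (A ∪ C) ∪ ciLattice D E (B ∪ C) := by
  intro U hU
  obtain ⟨hC, hD, hE⟩ := hU
  by_cases hA : A ⊆ U
  · exact Or.inl (Or.inr ⟨union_subset hA hC, hD, hE⟩)
  by_cases hB : B ⊆ U
  · exact Or.inr ⟨union_subset hB hC, hD, hE⟩
  · exact Or.inl (Or.inl ⟨hC, hA, hB⟩)
end
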